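/- Let (X_i)_{i ∈ I} be a cofiltered inverse system of spectral spaces with spectral transition maps (a functor from a cofiltered small category I to topological spaces, all values spectral, all transition maps spectral), and let X = lim_i X_i be its limit, realized as the subspace of compatible families inside the product ∏_i X_i. Then: (a) X is a spectral space and the projections X → X_i are spectral; (b) a continuous map Y → X from a spectral space Y is spectral if and only if all composites Y → X_i are spectral; (c) if Y is a spectral space with a spectral map Y → X such that all composites Y → X_i are generalizing, then Y → X is generalizing; (d) if moreover in (c) the map Y → X is surjective, then it is a quotient map. -/

import Mathlib

open CategoryTheory

universe u v

/-- A spectral space: a quasicompact topological space with a basis of quasicompact open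
subsets stable under finite intersection, in which every irreducible closed subset has a
unique generic point. -/
def IsSpectralSpace (X : Type u) [TopologicalSpace X] : Prop :=
  CompactSpace X ∧ T0Space X ∧ QuasiSober X ∧
    ∃ B : Set (Set X), TopologicalSpace.IsTopologicalBasis B ∧
      (∀ U ∈ B, IsCompact U) ∧ ∀ U ∈ B, ∀ V ∈ B, U ∩ V ∈ B

/-- A subset is constructible if it lies in the Boolean algebra of subsets generated by the
quasicompact open subsets. -/
inductive IsConstructibleSet {X : Type u} [TopologicalSpace X] : Set X → Prop
  | qcOpen (U : Set X) : IsOpen U → IsCompact U → IsConstructibleSet U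
  | compl (S : Set X) : IsConstructibleSet S → IsConstructibleSet Sᶜ
  | union (S T : Set X) : IsConstructibleSet S → IsConstructibleSet T →
      IsConstructibleSet (S ∪ T)

/-- A subset is pro-constructible if it is an intersection of constructible subsets. -/
def IsProconstructible {X : Type u} [TopologicalSpace X] (S : Set X) : Prop :=
  ∃ 𝒮 : Set (Set X), (∀ T ∈ 𝒮, IsConstructibleSet T) ∧ S = ⋂₀ 𝒮

/-- A continuous map `f : X → Y` is generalizing if whenever `y ∈ Y` is a generalization of
`f x` (i.e. `f x` lies in the closure of `{y}`), there exists a generalization `x'` of `x`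
(i.e. `x` lies in the closure of `{x'}`) with `f x' = y`. -/
def IsGeneralizing {X : Type u} {Y : Type v} [TopologicalSpace X] [TopologicalSpace Y]
    (f : X → Y) : Prop :=
  ∀ x : X, ∀ y : Y, f x ∈ closure ({y} : Set Y) →
    ∃ x' : X, x ∈ closure ({x'} : Set X) ∧ f x' = y

/-- The limit of an inverse system of topological spaces, realized as the subspace of
compatible families inside the product `∏ i, F.obj i`. -/
def InvLim {I : Type u} [SmallCategory I] (F : I ⥤ TopCat.{u}) : Type u :=
  {x : ∀ i : I, F.obj i // ∀ {i j : I} (f : i ⟶ j), F.map f (x i) = x j}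

noncomputable instance {I : Type u} [SmallCategory I] (F : I ⥤ TopCat.{u}) :
    TopologicalSpace (InvLim F) :=
  inferInstanceAs (TopologicalSpace
    {x : ∀ i : I, F.obj i // ∀ {i j : I} (f : i ⟶ j), F.map f (x i) = x j})

/-- The projection from the limit to the `i`-th term of the system. -/
def InvLim.proj {I : Type u} [SmallCategory I] (F : I ⥤ TopCat.{u}) (i : I) :
    InvLim F → F.obj i := fun x => x.1 i

section PatchAux

open TopologicalSpace Topology

variable {X : Type*} [TopologicalSpace X] {Y : Type*} [TopologicalSpace Y]

/-- Generators of the patch (constructible) topology. -/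
def patchGen (X : Type*) [TopologicalSpace X] : Set (Set X) :=
  {U | IsOpen U ∧ IsCompact U} ∪ (compl '' {U | IsOpen U ∧ IsCompact U})

/-- The patch topology. -/
def patchTop (X : Type*) [TopologicalSpace X] : TopologicalSpace X :=
  TopologicalSpace.generateFrom (patchGen X)

theorem exists_finite_basis_rep {B : Set (Set X)}
    (hB : IsTopologicalBasis B) {U : Set X} (hU : IsOpen U) (hUc : IsCompact U) :
    ∃ S : Set (Set X), S.Finite ∧ S ⊆ B ∧ U = ⋃₀ S := by
  obtain ⟨S, hSB, rfl⟩ := hB.open_eq_sUnion hU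
  obtain ⟨T, hTS, hTfin, hcov⟩ := hUc.elim_finite_subcover_image
    (fun s hs => hB.isOpen (hSB hs)) (by rw [← Set.sUnion_eq_biUnion])
  refine ⟨T, hTfin, fun s hs => hSB (hTS hs), le_antisymm ?_ ?_⟩
  · simpa [← Set.sUnion_eq_biUnion] using hcov
  · exact Set.sUnion_subset fun s hs => Set.subset_sUnion_of_mem (hTS hs)

theorem IsSpectralSpace.isCompact_inter (hX : IsSpectralSpace X) {U V : Set X}
    (hU : IsOpen U) (hUc : IsCompact U) (hV : IsOpen V) (hVc : IsCompact V) :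
    IsCompact (U ∩ V) := by
  obtain ⟨_, _, _, B, hB, hBc, hBi⟩ := hX
  obtain ⟨S, hSf, hSB, rfl⟩ := exists_finite_basis_rep hB hU hUc
  obtain ⟨T, hTf, hTB, rfl⟩ := exists_finite_basis_rep hB hV hVc
  rw [Set.sUnion_inter_sUnion]
  refine (hSf.prod hTf).isCompact_biUnion ?_
  rintro ⟨s, t⟩ ⟨hs, ht⟩
  exact hBc _ (hBi s (hSB hs) t (hTB ht))

theorem IsSpectralSpace.isOpen_patch (hX : IsSpectralSpace X) {U : Set X} (hU : IsOpen U) :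
    IsOpen[patchTop X] U := by
  obtain ⟨_, _, _, B, hB, hBc, hBi⟩ := hX
  obtain ⟨S, hSB, rfl⟩ := hB.open_eq_sUnion hU
  exact @isOpen_sUnion X (patchTop X) _ fun s hs =>
    TopologicalSpace.GenerateOpen.basic s (Or.inl ⟨hB.isOpen (hSB hs), hBc s (hSB hs)⟩)

theorem isOpen_patch_of_qc {U : Set X} (hU : IsOpen U) (hUc : IsCompact U) :
    IsOpen[patchTop X] U :=
  TopologicalSpace.GenerateOpen.basic U (Or.inl ⟨hU, hUc⟩)

theorem isClosed_patch_of_qc {U : Set X} (hU : IsOpen U) (hUc : IsCompact U) :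
    IsClosed[patchTop X] U :=
  @IsClosed.mk X (patchTop X) U (TopologicalSpace.GenerateOpen.basic Uᶜ (Or.inr ⟨U, ⟨hU, hUc⟩, rfl⟩))

theorem IsSpectralSpace.isClosed_patch (hX : IsSpectralSpace X) {S : Set X} (hS : IsClosed S) :
    IsClosed[patchTop X] S :=
  @IsClosed.mk X (patchTop X) S (hX.isOpen_patch hS.isOpen_compl)

theorem IsSpectralSpace.patch_t2 (hX : IsSpectralSpace X) : @T2Space X (patchTop X) := by
  obtain ⟨hc, ht0, hs, B, hB, hBc, hBi⟩ := hX
  refine @T2Space.mk X (patchTop X) fun x y hxy => ?_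
  obtain ⟨O, hO, hxor⟩ := exists_isOpen_xor'_mem hxy
  rcases hxor with ⟨hx, hy⟩ | ⟨hy, hx⟩
  · obtain ⟨U, hUB, hxU, hUO⟩ := hB.exists_subset_of_mem_open hx hO
    exact ⟨U, Uᶜ, isOpen_patch_of_qc (hB.isOpen hUB) (hBc U hUB),
      (isClosed_patch_of_qc (hB.isOpen hUB) (hBc U hUB)).isOpen_compl,
      hxU, fun h => hy (hUO h), disjoint_compl_right⟩
  · obtain ⟨U, hUB, hyU, hUO⟩ := hB.exists_subset_of_mem_open hy hO
    exact ⟨Uᶜ, U, (isClosed_patch_of_qc (hB.isOpen hUB) (hBc U hUB)).isOpen_compl,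
      isOpen_patch_of_qc (hB.isOpen hUB) (hBc U hUB),
      fun h => hx (hUO h), hyU, disjoint_compl_left⟩

theorem IsSpectralSpace.patch_compactSpace (hX : IsSpectralSpace X) :
    @CompactSpace X (patchTop X) := by
  have hXc := hX
  obtain ⟨hc, ht0, hsob, B, hB, hBc, hBi⟩ := hX
  refine @CompactSpace.mk X (patchTop X) ?_
  rw [@isCompact_iff_ultrafilter_le_nhds X (patchTop X)]
  intro 𝒰 _
  -- the closed set cut out by the complements of qc opens not in 𝒰
  set Z : Set X := ⋂ (V : {V : Set X // IsOpen V ∧ IsCompact V ∧ V ∉ 𝒰}), (V.1)ᶜ with hZdef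
  have hZclosed : IsClosed Z := isClosed_iInter fun V => (V.2.1).isClosed_compl
  have hmeets : ∀ U : Set X, IsOpen U → IsCompact U → U ∈ 𝒰 → (U ∩ Z).Nonempty := by
    intro U hU hUc hU𝒰
    refine hUc.inter_iInter_nonempty _ (fun V => (V.2.1).isClosed_compl) ?_
    intro t
    refine Ultrafilter.nonempty_of_mem (Filter.inter_mem hU𝒰 ?_)
    refine Filter.biInter_finset_mem t |>.2 ?_
    intro V _
    exact (Ultrafilter.compl_mem_iff_notMem).2 V.2.2.2
  have hsubZ : ∀ U : Set X, IsOpen U → IsCompact U → U ∉ 𝒰 → Z ⊆ Uᶜ := by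
    intro U hU hUc hU𝒰
    exact Set.iInter_subset (fun V : {V : Set X // IsOpen V ∧ IsCompact V ∧ V ∉ 𝒰} => (V.1)ᶜ)
      ⟨U, hU, hUc, hU𝒰⟩
  have hne : Z.Nonempty := by
    have := hmeets Set.univ isOpen_univ CompactSpace.isCompact_univ Filter.univ_mem
    simpa using this
  have hmem_of_meets : ∀ U : Set X, IsOpen U → IsCompact U → (U ∩ Z).Nonempty → U ∈ 𝒰 := by
    intro U hU hUc h
    by_contra hU𝒰
    obtain ⟨z, hz1, hz2⟩ := h
    exact hsubZ U hU hUc hU𝒰 hz2 hz1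
  have hirr : IsIrreducible Z := by
    refine ⟨hne, fun O₁ O₂ hO₁ hO₂ h₁ h₂ => ?_⟩
    obtain ⟨z₁, hz₁Z, hz₁O⟩ := h₁
    obtain ⟨z₂, hz₂Z, hz₂O⟩ := h₂
    obtain ⟨U₁, hU₁B, hzU₁, hU₁O⟩ := hB.exists_subset_of_mem_open hz₁O hO₁
    obtain ⟨U₂, hU₂B, hzU₂, hU₂O⟩ := hB.exists_subset_of_mem_open hz₂O hO₂
    have hU₁𝒰 : U₁ ∈ 𝒰 := hmem_of_meets U₁ (hB.isOpen hU₁B) (hBc _ hU₁B) ⟨z₁, hzU₁, hz₁Z⟩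
    have hU₂𝒰 : U₂ ∈ 𝒰 := hmem_of_meets U₂ (hB.isOpen hU₂B) (hBc _ hU₂B) ⟨z₂, hzU₂, hz₂Z⟩
    have h12 := hmeets (U₁ ∩ U₂) ((hB.isOpen hU₁B).inter (hB.isOpen hU₂B))
      (hBc _ (hBi _ hU₁B _ hU₂B)) (Filter.inter_mem hU₁𝒰 hU₂𝒰)
    obtain ⟨w, hw1, hw2⟩ := h12
    exact ⟨w, hw2, hU₁O hw1.1, hU₂O hw1.2⟩
  obtain ⟨η, hη⟩ := hsob.sober hirr hZclosed
  have hηZ : η ∈ Z := hη ▸ subset_closure rfl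
  refine ⟨η, Set.mem_univ η, ?_⟩
  rw [patchTop, TopologicalSpace.nhds_generateFrom]
  refine le_iInf fun s => le_iInf fun hs => Filter.le_principal_iff.2 ?_
  obtain ⟨hηs, hsg⟩ := hs
  rcases hsg with ⟨hs1, hs2⟩ | ⟨U, ⟨hU1, hU2⟩, rfl⟩
  · exact hmem_of_meets s hs1 hs2 ⟨η, hηs, hηZ⟩
  · rw [Ultrafilter.mem_coe, Ultrafilter.compl_mem_iff_notMem]
    intro hU𝒰
    obtain ⟨w, hwU, hwZ⟩ := hmeets U hU1 hU2 hU𝒰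
    -- w ∈ Z = closure {η}, U open ∋ w, so η ∈ U, contradicting η ∈ Uᶜ
    have : η ∈ U := by
      have hwcl : w ∈ closure ({η} : Set X) := hη.symm ▸ hwZ
      rcases mem_closure_iff.1 hwcl U hU1 hwU with ⟨a, haU, ha⟩
      rwa [Set.mem_singleton_iff.1 ha] at haU
    exact hηs this

theorem IsSpectralMap.patch_continuous {f : X → Y} (hf : IsSpectralMap f) :
    Continuous[patchTop X, patchTop Y] f := by
  rw [show patchTop Y = TopologicalSpace.generateFrom (patchGen Y) from rfl,
    continuous_generateFrom_iff]
  rintro s (⟨hs1, hs2⟩ | ⟨U, ⟨hU1, hU2⟩, rfl⟩)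
  · exact isOpen_patch_of_qc (hs1.preimage hf.continuous)
      (hf.isCompact_preimage_of_isOpen hs1 hs2)
  · rw [Set.preimage_compl]
    exact (isClosed_patch_of_qc (hU1.preimage hf.continuous)
      (hf.isCompact_preimage_of_isOpen hU1 hU2)).isOpen_compl

theorem IsSpectralSpace.isClosed_of_patch (hX : IsSpectralSpace X) {S : Set X}
    (hS : IsClosed[patchTop X] S)
    (hstab : ∀ x ∈ S, ∀ y, y ∈ closure ({x} : Set X) → y ∈ S) :
    IsClosed S := by
  have hXc := hX
  obtain ⟨hc, ht0, hsob, B, hB, hBc, hBi⟩ := hX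
  refine isClosed_of_closure_subset fun x hxcl => ?_
  have hScomp : @IsCompact X (patchTop X) S :=
    @IsClosed.isCompact X (patchTop X) S hXc.patch_compactSpace hS
  have key : (S ∩ ⋂ (U : {U : Set X // U ∈ B ∧ x ∈ U}), U.1).Nonempty := by
    refine @IsCompact.inter_iInter_nonempty X (patchTop X) S _ hScomp _
      (fun U => isClosed_patch_of_qc (hB.isOpen U.2.1) (hBc _ U.2.1)) ?_
    intro t
    have hW : IsOpen (⋂ U ∈ t, (U : {U : Set X // U ∈ B ∧ x ∈ U}).1) :=
      isOpen_biInter_finset fun U _ => hB.isOpen U.2.1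
    have hxW : x ∈ ⋂ U ∈ t, (U : {U : Set X // U ∈ B ∧ x ∈ U}).1 :=
      Set.mem_biInter fun U _ => U.2.2
    obtain ⟨z, hz1, hz2⟩ := mem_closure_iff.1 hxcl _ hW hxW
    exact ⟨z, hz2, hz1⟩
  obtain ⟨z, hzS, hz⟩ := key
  have hxz : x ∈ closure ({z} : Set X) :=
    (hB.mem_closure_iff).2 fun U hUB hxU =>
      ⟨z, Set.mem_iInter.1 hz ⟨U, hUB, hxU⟩, rfl⟩
  exact hstab z hzS x hxz

end PatchAux

section LimitAux

open CategoryTheory TopologicalSpace Topology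

variable {I : Type u} [SmallCategory I] [IsCofiltered I] (F : I ⥤ TopCat.{u})

/-- The underlying set of the limit inside the product. -/
def limSet : Set (∀ i : I, F.obj i) :=
  {x | ∀ {i j : I} (f : i ⟶ j), F.map f (x i) = x j}

/-- The product of the patch topologies. -/
def PtTop : TopologicalSpace (∀ i : I, F.obj i) :=
  @Pi.topologicalSpace I (fun i => F.obj i) (fun i => patchTop (F.obj i))

theorem ptTop_le (hobj : ∀ i : I, IsSpectralSpace (F.obj i)) :
    PtTop F ≤ Pi.topologicalSpace :=
  iInf_mono fun i => induced_mono
    (TopologicalSpace.le_def.2 fun _U hU => (hobj i).isOpen_patch hU)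

theorem isCompact_of_tople {α : Type*} {t t' : TopologicalSpace α} (h : t ≤ t') {s : Set α}
    (hs : @IsCompact α t s) : @IsCompact α t' s := by
  have := @IsCompact.image α α t t' s id hs (continuous_id_of_le h)
  simpa using this

theorem pt_compactSpace (hobj : ∀ i : I, IsSpectralSpace (F.obj i)) :
    @CompactSpace (∀ i : I, F.obj i) (PtTop F) :=
  @Pi.compactSpace I (fun i => F.obj i) (fun i => patchTop (F.obj i))
    (fun i => (hobj i).patch_compactSpace)

theorem limSet_patchClosed (hobj : ∀ i : I, IsSpectralSpace (F.obj i))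
    (hmap : ∀ (i j : I) (f : i ⟶ j), IsSpectralMap (F.map f)) :
    @IsClosed _ (PtTop F) (limSet F) := by
  have hrw : limSet F = ⋂ a : Σ i j : I, i ⟶ j, {x | F.map a.2.2 (x a.1) = x a.2.1} := by
    ext x
    exact ⟨fun h => Set.mem_iInter.2 fun a => h a.2.2,
      fun h {i j} f => Set.mem_iInter.1 h ⟨i, j, f⟩⟩
  rw [hrw]
  refine @isClosed_iInter _ _ (PtTop F) _ fun a => ?_
  have h1 : @Continuous _ _ (PtTop F) (patchTop (F.obj a.2.1)) (fun x => F.map a.2.2 (x a.1)) :=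
    @Continuous.comp _ _ _ (PtTop F) (patchTop (F.obj a.1)) (patchTop (F.obj a.2.1))
      _ _ (hmap _ _ a.2.2).patch_continuous
      (@continuous_apply I (fun i => F.obj i) (fun i => patchTop (F.obj i)) a.1)
  have h2 : @Continuous _ _ (PtTop F) (patchTop (F.obj a.2.1)) (fun x => x a.2.1) :=
    @continuous_apply I (fun i => F.obj i) (fun i => patchTop (F.obj i)) a.2.1
  exact @isClosed_eq _ _ (patchTop (F.obj a.2.1)) (PtTop F) ((hobj a.2.1).patch_t2) _ _ h1 h2

theorem invLim_continuous_proj (i : I) : Continuous (InvLim.proj F i) :=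
  (continuous_apply i).comp continuous_subtype_val

theorem invLim_embedding_val :
    Topology.IsEmbedding (Subtype.val : InvLim F → ∀ i : I, F.obj i) :=
  Topology.IsEmbedding.subtypeVal

theorem invLim_range_val :
    Set.range (Subtype.val : InvLim F → ∀ i : I, F.obj i) = limSet F := by
  exact Subtype.range_coe_subtype

theorem invLim_isCompact_of_patchClosed (hobj : ∀ i : I, IsSpectralSpace (F.obj i))
    (hmap : ∀ (i j : I) (f : i ⟶ j), IsSpectralMap (F.map f))
    {A : Set (∀ i : I, F.obj i)} (hA : @IsClosed _ (PtTop F) A) (hAsub : A ⊆ limSet F) :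
    IsCompact (Subtype.val ⁻¹' A : Set (InvLim F)) := by
  refine (invLim_embedding_val F).isCompact_iff.2 ?_
  have himg : (Subtype.val '' (Subtype.val ⁻¹' A : Set (InvLim F))) = A := by
    refine Set.image_preimage_eq_inter_range.trans ?_
    rw [invLim_range_val]
    exact Set.inter_eq_self_of_subset_left hAsub
  rw [himg]
  refine isCompact_of_tople (ptTop_le F hobj) ?_
  exact @IsClosed.isCompact _ (PtTop F) A (pt_compactSpace F hobj) hA

theorem invLim_compactSpace (hobj : ∀ i : I, IsSpectralSpace (F.obj i))
    (hmap : ∀ (i j : I) (f : i ⟶ j), IsSpectralMap (F.map f)) :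
    CompactSpace (InvLim F) := by
  constructor
  have : (Set.univ : Set (InvLim F)) = Subtype.val ⁻¹' (limSet F) := by
    ext x; simp [limSet]; exact fun f => x.2 f
  rw [this]
  exact invLim_isCompact_of_patchClosed F hobj hmap
    (limSet_patchClosed F hobj hmap) le_rfl

end LimitAux


section LimitAux2

set_option linter.unusedSectionVars false

open CategoryTheory TopologicalSpace Topology

variable {I : Type u} [SmallCategory I] [IsCofiltered I] (F : I ⥤ TopCat.{u})

theorem invLim_isCompact_proj_preimage (hobj : ∀ i : I, IsSpectralSpace (F.obj i))
    (hmap : ∀ (i j : I) (f : i ⟶ j), IsSpectralMap (F.map f))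
    (i : I) {U : Set (F.obj i)} (hU : IsOpen U) (hUc : IsCompact U) :
    IsCompact (InvLim.proj F i ⁻¹' U) := by
  have heq : (InvLim.proj F i ⁻¹' U : Set (InvLim F)) =
      Subtype.val ⁻¹' (limSet F ∩ (fun x : ∀ i : I, F.obj i => x i) ⁻¹' U) := by
    ext z
    exact ⟨fun h => ⟨fun {a b} f => z.2 f, h⟩, fun h => h.2⟩
  rw [heq]
  refine invLim_isCompact_of_patchClosed F hobj hmap ?_ Set.inter_subset_left
  refine @IsClosed.inter _ _ _ (PtTop F) (limSet_patchClosed F hobj hmap) ?_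
  exact @IsClosed.preimage _ _ (PtTop F) (patchTop (F.obj i)) _
    (@continuous_apply I (fun k => F.obj k) (fun k => patchTop (F.obj k)) i) _
    (isClosed_patch_of_qc hU hUc)

theorem invLim_proj_spectral (hobj : ∀ i : I, IsSpectralSpace (F.obj i))
    (hmap : ∀ (i j : I) (f : i ⟶ j), IsSpectralMap (F.map f)) (i : I) :
    IsSpectralMap (InvLim.proj F i) :=
  ⟨invLim_continuous_proj F i, fun _U hU hUc =>
    invLim_isCompact_proj_preimage F hobj hmap i hU hUc⟩

/-- The canonical basis of the limit. -/
def invLimBasis : Set (Set (InvLim F)) :=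
  {T | ∃ (i : I) (U : Set (F.obj i)), IsOpen U ∧ IsCompact U ∧ T = InvLim.proj F i ⁻¹' U}

theorem IsSpectralSpace.isCompact_biInter_finset {X : Type*} [TopologicalSpace X]
    (hX : IsSpectralSpace X) {ι : Type*} (s : Finset ι)
    (U : ι → Set X) (hU : ∀ i ∈ s, IsOpen (U i) ∧ IsCompact (U i)) :
    IsOpen (⋂ i ∈ s, U i) ∧ IsCompact (⋂ i ∈ s, U i) := by
  classical
  induction s using Finset.induction_on with
  | empty =>
    rw [show (⋂ i ∈ (∅ : Finset ι), U i) = Set.univ by simp]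
    exact ⟨isOpen_univ, hX.1.isCompact_univ⟩
  | @insert a s ha ih =>
    rw [Finset.set_biInter_insert]
    have h1 := hU a (Finset.mem_insert_self a s)
    have h2 := ih fun i hi => hU i (Finset.mem_insert_of_mem hi)
    exact ⟨h1.1.inter h2.1, hX.isCompact_inter h1.1 h1.2 h2.1 h2.2⟩

theorem invLim_isBasis (hobj : ∀ i : I, IsSpectralSpace (F.obj i))
    (hmap : ∀ (i j : I) (f : i ⟶ j), IsSpectralMap (F.map f)) :
    IsTopologicalBasis (invLimBasis F) := by
  refine isTopologicalBasis_of_isOpen_of_nhds ?_ ?_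
  · rintro T ⟨i, U, hU, _, rfl⟩
    exact hU.preimage (invLim_continuous_proj F i)
  · intro a O haO hO
    obtain ⟨O', hO', hpre⟩ := (Topology.IsInducing.subtypeVal :
      Topology.IsInducing (Subtype.val : InvLim F → ∀ i : I, F.obj i)).isOpen_iff.1 hO
    obtain ⟨s, u, hu, hsub⟩ := isOpen_pi_iff.1 hO' a.1 (by rw [← hpre] at haO; exact haO)
    -- choose basic quasicompact opens
    have hWex : ∀ i : I, ∃ W : Set (F.obj i),
        i ∈ s → ((IsOpen W ∧ IsCompact W) ∧ a.1 i ∈ W ∧ W ⊆ u i) := by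
      intro i
      by_cases hi : i ∈ s
      · obtain ⟨_, _, _, B, hB, hBc, _⟩ := hobj i
        obtain ⟨W, hWB, haW, hWu⟩ := hB.exists_subset_of_mem_open (hu i hi).2 (hu i hi).1
        exact ⟨W, fun _ => ⟨⟨hB.isOpen hWB, hBc _ hWB⟩, haW, hWu⟩⟩
      · exact ⟨∅, fun h => absurd h hi⟩
    choose W hW using hWex
    obtain ⟨k, hk⟩ := IsCofiltered.inf_objs_exists s
    have f : ∀ σ : {i // i ∈ s}, (k ⟶ σ.1) := fun σ => (hk σ.2).some
    set W' : Set (F.obj k) := ⋂ σ ∈ s.attach, F.map (f σ) ⁻¹' (W σ.1) with hW'def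
    have hW'qc : IsOpen W' ∧ IsCompact W' := by
      refine (hobj k).isCompact_biInter_finset s.attach _ fun σ _ => ?_
      have h1 := (hW σ.1 σ.2).1
      exact ⟨h1.1.preimage (hmap _ _ (f σ)).continuous,
        (hmap _ _ (f σ)).isCompact_preimage_of_isOpen h1.1 h1.2⟩
    refine ⟨InvLim.proj F k ⁻¹' W', ⟨k, W', hW'qc.1, hW'qc.2, rfl⟩, ?_, ?_⟩
    · refine Set.mem_iInter₂.2 fun σ _ => ?_
      show F.map (f σ) (a.1 k) ∈ W σ.1
      rw [a.2 (f σ)]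
      exact (hW σ.1 σ.2).2.1
    · intro z hz
      have hz' : ∀ σ : {i // i ∈ s}, z.1 σ.1 ∈ W σ.1 := by
        intro σ
        have := Set.mem_iInter₂.1 hz σ (Finset.mem_attach _ _)
        rwa [← z.2 (f σ)]
      rw [← hpre]
      refine hsub ?_
      intro i hi
      exact (hW i hi).2.2 (hz' ⟨i, hi⟩)

end LimitAux2

section LimitAux3

set_option linter.unusedSectionVars false

open CategoryTheory TopologicalSpace Topology

variable {I : Type u} [SmallCategory I] [IsCofiltered I] (F : I ⥤ TopCat.{u})

theorem invLim_t0 (hobj : ∀ i : I, IsSpectralSpace (F.obj i)) : T0Space (InvLim F) := by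
  haveI : ∀ i : I, T0Space (F.obj i) := fun i => (hobj i).2.1
  have : T0Space {x : ∀ i : I, F.obj i // ∀ {i j : I} (f : i ⟶ j), F.map f (x i) = x j} :=
    inferInstance
  exact this

theorem invLim_quasiSober (hobj : ∀ i : I, IsSpectralSpace (F.obj i))
    (hmap : ∀ (i j : I) (f : i ⟶ j), IsSpectralMap (F.map f)) :
    QuasiSober (InvLim F) := by
  constructor
  intro S hirr hclosed
  have hTirr : ∀ i : I, IsIrreducible (closure (InvLim.proj F i '' S)) := fun i =>
    (hirr.image _ (invLim_continuous_proj F i).continuousOn).closure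
  have hgen : ∀ i : I, ∃ x, IsGenericPoint x (closure (InvLim.proj F i '' S)) := fun i =>
    ((hobj i).2.2.1).sober (hTirr i) isClosed_closure
  choose η hη using hgen
  have hcompat : ∀ {i j : I} (f : i ⟶ j), F.map f (η i) = η j := by
    intro i j f
    haveI : T0Space (F.obj j) := (hobj j).2.1
    refine IsGenericPoint.eq ?_ (hη j)
    have h1 : IsGenericPoint (F.map f (η i))
        (closure (F.map f '' closure (InvLim.proj F i '' S))) :=
      (hη i).image (F.map f).hom.continuous
    rwa [closure_image_closure (F.map f).hom.continuous,
      show F.map f '' (InvLim.proj F i '' S) = InvLim.proj F j '' S by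
        rw [← Set.image_comp]
        exact Set.image_congr fun z hz => z.2 f] at h1
  set η' : InvLim F := ⟨η, hcompat⟩ with hη'def
  have hbasis := invLim_isBasis F hobj hmap
  refine ⟨η', le_antisymm ?_ ?_⟩
  · have hmemS : η' ∈ S := by
      rw [← hclosed.closure_eq]
      refine hbasis.mem_closure_iff.2 ?_
      rintro T ⟨i, U, hU, hUc, rfl⟩ hηT
      have : U ∩ InvLim.proj F i '' S ≠ ∅ := by
        have hmem : η i ∈ closure (InvLim.proj F i '' S) := (hη i).symm ▸ subset_closure rfl
        intro hdisj
        obtain ⟨w, hw1, hw2⟩ := mem_closure_iff.1 hmem U hU hηT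
        exact absurd (Set.mem_inter hw1 hw2) (hdisj ▸ Set.notMem_empty w)
      obtain ⟨w, hwU, z, hzS, hzw⟩ := Set.nonempty_iff_ne_empty.2 this
      exact ⟨z, (by rw [Set.mem_preimage, show InvLim.proj F i z = w from hzw]; exact hwU), hzS⟩
    rw [← hclosed.closure_eq]
    exact closure_mono (Set.singleton_subset_iff.2 hmemS)
  · intro z hzS
    refine hbasis.mem_closure_iff.2 ?_
    rintro T ⟨i, U, hU, hUc, rfl⟩ hzT
    have hziU : InvLim.proj F i z ∈ U := hzT
    have hzi : InvLim.proj F i z ∈ closure ({η i} : Set (F.obj i)) :=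
      (hη i) ▸ subset_closure (Set.mem_image_of_mem _ hzS)
    obtain ⟨w, hw1, hw2⟩ := mem_closure_iff.1 hzi U hU hziU
    rw [Set.mem_singleton_iff.1 hw2] at hw1
    exact ⟨η', hw1, rfl⟩

theorem invLim_isSpectral (hobj : ∀ i : I, IsSpectralSpace (F.obj i))
    (hmap : ∀ (i j : I) (f : i ⟶ j), IsSpectralMap (F.map f)) :
    IsSpectralSpace (InvLim F) := by
  refine ⟨invLim_compactSpace F hobj hmap, invLim_t0 F hobj, invLim_quasiSober F hobj hmap,
    invLimBasis F, invLim_isBasis F hobj hmap, ?_, ?_⟩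
  · rintro T ⟨i, U, hU, hUc, rfl⟩
    exact invLim_isCompact_proj_preimage F hobj hmap i hU hUc
  · rintro T₁ ⟨i, U, hU, hUc, rfl⟩ T₂ ⟨j, V, hV, hVc, rfl⟩
    obtain ⟨k, f, g, -⟩ := IsCofilteredOrEmpty.cone_objs i j
    refine ⟨k, F.map f ⁻¹' U ∩ F.map g ⁻¹' V,
      (hU.preimage (F.map f).hom.continuous).inter (hV.preimage (F.map g).hom.continuous),
      (hobj k).isCompact_inter (hU.preimage (F.map f).hom.continuous)
        ((hmap _ _ f).isCompact_preimage_of_isOpen hU hUc)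
        (hV.preimage (F.map g).hom.continuous)
        ((hmap _ _ g).isCompact_preimage_of_isOpen hV hVc), ?_⟩
    ext z
    constructor
    · rintro ⟨h1, h2⟩
      exact ⟨(show F.map f (z.1 k) ∈ U by rw [z.2 f]; exact h1),
        (show F.map g (z.1 k) ∈ V by rw [z.2 g]; exact h2)⟩
    · rintro ⟨h1, h2⟩
      have h1' : F.map f (z.1 k) ∈ U := h1
      have h2' : F.map g (z.1 k) ∈ V := h2
      rw [z.2 f] at h1'
      rw [z.2 g] at h2'
      exact ⟨h1', h2'⟩

end LimitAux3

section LimitAux4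

set_option linter.unusedSectionVars false

open CategoryTheory TopologicalSpace Topology

variable {I : Type u} [SmallCategory I] [IsCofiltered I] (F : I ⥤ TopCat.{u})

theorem invLim_spectral_iff (hobj : ∀ i : I, IsSpectralSpace (F.obj i))
    (hmap : ∀ (i j : I) (f : i ⟶ j), IsSpectralMap (F.map f))
    {Y : Type u} [TopologicalSpace Y] (hY : IsSpectralSpace Y)
    (g : Y → InvLim F) (hgc : Continuous g) :
    IsSpectralMap g ↔ ∀ i : I, IsSpectralMap (InvLim.proj F i ∘ g) := by
  constructor
  · intro hg i
    exact (invLim_proj_spectral F hobj hmap i).comp hg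
  · intro h
    refine ⟨hgc, fun W hW hWc => ?_⟩
    obtain ⟨S, hSf, hSB, rfl⟩ := exists_finite_basis_rep (invLim_isBasis F hobj hmap) hW hWc
    rw [Set.preimage_sUnion]
    refine Set.Finite.isCompact_biUnion hSf fun T hT => ?_
    obtain ⟨i, U, hU, hUc, rfl⟩ := hSB hT
    exact (h i).isCompact_preimage_of_isOpen hU hUc

theorem invLim_generalizing (hobj : ∀ i : I, IsSpectralSpace (F.obj i))
    (hmap : ∀ (i j : I) (f : i ⟶ j), IsSpectralMap (F.map f))
    {Y : Type u} [TopologicalSpace Y] (hY : IsSpectralSpace Y)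
    (g : Y → InvLim F) (hg : IsSpectralMap g)
    (hgen : ∀ i : I, IsGeneralizing (InvLim.proj F i ∘ g)) :
    IsGeneralizing g := by
  intro y x' hyx'
  have hYspec := hY
  obtain ⟨hYc, hYt0, hYsob, B, hB, hBc, hBi⟩ := hY
  set G : Set Y := ⋂ (U : {U : Set Y // U ∈ B ∧ y ∈ U}), U.1 with hGdef
  have hGmem : ∀ y' : Y, y' ∈ G ↔ y ∈ closure ({y'} : Set Y) := by
    intro y'
    rw [hB.mem_closure_iff]
    constructor
    · intro h U hUB hyU
      exact ⟨y', Set.mem_iInter.1 h ⟨U, hUB, hyU⟩, rfl⟩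
    · intro h
      refine Set.mem_iInter.2 fun U => ?_
      obtain ⟨w, hw1, hw2⟩ := h U.1 U.2.1 U.2.2
      rw [← Set.mem_singleton_iff.1 hw2]
      exact hw1
  have hGclosed : @IsClosed Y (patchTop Y) G :=
    @isClosed_iInter _ _ (patchTop Y) _ fun U =>
      isClosed_patch_of_qc (hB.isOpen U.2.1) (hBc _ U.2.1)
  set A : I → Set Y := fun i => G ∩ (InvLim.proj F i ∘ g) ⁻¹' {x'.1 i} with hAdef
  have hAclosed : ∀ i, @IsClosed Y (patchTop Y) (A i) := by
    intro i
    refine @IsClosed.inter _ _ _ (patchTop Y) hGclosed ?_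
    have hT1 : @T1Space (F.obj i) (patchTop (F.obj i)) :=
      @T2Space.t1Space _ (patchTop (F.obj i)) (hobj i).patch_t2
    have hsingleton : @IsClosed (F.obj i) (patchTop (F.obj i)) {x'.1 i} :=
      @isClosed_singleton _ (patchTop (F.obj i)) hT1 _
    exact @IsClosed.preimage _ _ (patchTop Y) (patchTop (F.obj i)) _
      ((invLim_proj_spectral F hobj hmap i).comp hg).patch_continuous _ hsingleton
  have hfin : ∀ t : Finset I, (Set.univ ∩ ⋂ i ∈ t, A i).Nonempty := by
    intro t
    obtain ⟨k, hk⟩ := IsCofiltered.inf_objs_exists t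
    have hxk : (InvLim.proj F k ∘ g) y ∈ closure ({x'.1 k} : Set (F.obj k)) := by
      have := image_closure_subset_closure_image (invLim_continuous_proj F k)
        (Set.mem_image_of_mem (InvLim.proj F k) hyx')
      rwa [Set.image_singleton] at this
    obtain ⟨y', hy'cl, hy'val⟩ := hgen k y (x'.1 k) hxk
    refine ⟨y', Set.mem_univ y', Set.mem_biInter fun i hi => ?_⟩
    have φ : k ⟶ i := (hk hi).some
    refine ⟨(hGmem y').2 hy'cl, ?_⟩
    show (g y').1 i ∈ ({x'.1 i} : Set (F.obj i))
    rw [Set.mem_singleton_iff, ← (g y').2 φ, ← x'.2 φ]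
    exact congrArg (F.map φ) hy'val
  have hcompact : @IsCompact Y (patchTop Y) Set.univ :=
    @CompactSpace.isCompact_univ _ (patchTop Y) hYspec.patch_compactSpace
  obtain ⟨y', -, hy'⟩ := @IsCompact.inter_iInter_nonempty Y (patchTop Y) Set.univ I
    hcompact A hAclosed hfin
  have hy'A : ∀ i, y' ∈ A i := Set.mem_iInter.1 hy'
  obtain ⟨i₀⟩ := (IsCofiltered.nonempty : Nonempty I)
  refine ⟨y', (hGmem y').1 (hy'A i₀).1, ?_⟩
  exact Subtype.ext (funext fun i => Set.mem_singleton_iff.1 (hy'A i).2)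

theorem invLim_quotient (hobj : ∀ i : I, IsSpectralSpace (F.obj i))
    (hmap : ∀ (i j : I) (f : i ⟶ j), IsSpectralMap (F.map f))
    {Y : Type u} [TopologicalSpace Y] (hY : IsSpectralSpace Y)
    (g : Y → InvLim F) (hg : IsSpectralMap g)
    (hgenlz : IsGeneralizing g) (hsurj : Function.Surjective g) (U : Set (InvLim F)) :
    IsOpen U ↔ IsOpen (g ⁻¹' U) := by
  refine ⟨fun h => h.preimage hg.continuous, fun h => ?_⟩
  have hXspec := invLim_isSpectral F hobj hmap
  have hclY : IsClosed (g ⁻¹' Uᶜ) := by rw [Set.preimage_compl]; exact h.isClosed_compl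
  have hpcl : @IsClosed _ (patchTop (InvLim F)) Uᶜ := by
    have himg : g '' (g ⁻¹' Uᶜ) = Uᶜ := Set.image_preimage_eq _ hsurj
    have hpatchY : @IsClosed Y (patchTop Y) (g ⁻¹' Uᶜ) := hY.isClosed_patch hclY
    have hcmp : @IsCompact Y (patchTop Y) (g ⁻¹' Uᶜ) :=
      @IsClosed.isCompact _ (patchTop Y) _ hY.patch_compactSpace hpatchY
    have hcmpX : @IsCompact _ (patchTop (InvLim F)) (g '' (g ⁻¹' Uᶜ)) :=
      @IsCompact.image _ _ (patchTop Y) (patchTop (InvLim F)) _ g hcmp hg.patch_continuous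
    rw [himg] at hcmpX
    exact @IsCompact.isClosed _ (patchTop (InvLim F)) hXspec.patch_t2 _ hcmpX
  have hstab : ∀ x ∈ Uᶜ, ∀ x₂, x₂ ∈ closure ({x} : Set (InvLim F)) → x₂ ∈ Uᶜ := by
    intro x hx x₂ hx₂
    obtain ⟨y₀, rfl⟩ := hsurj x₂
    obtain ⟨y', hy'cl, hy'eq⟩ := hgenlz y₀ x hx₂
    have hy'mem : y' ∈ g ⁻¹' Uᶜ := by rw [Set.mem_preimage, hy'eq]; exact hx
    exact closure_minimal (Set.singleton_subset_iff.2 hy'mem) hclY hy'cl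
  have hfinal := hXspec.isClosed_of_patch hpcl hstab
  simpa using hfinal.isOpen_compl

end LimitAux4

/-- Let `(X_i)_{i ∈ I}` be a cofiltered inverse system of spectral spaces with spectral
transition maps, with limit `X = lim_i X_i` realized inside the product. Then (a) `X` is
spectral and the projections are spectral; (b) a continuous map `Y → X` from a spectral
space is spectral iff all composites `Y → X_i` are spectral; (c) if `Y → X` is a spectral
map from a spectral space whose composites `Y → X_i` are all generalizing, then `Y → X` is
generalizing, and (d) if it is moreover surjective, then it is a quotient map. -/
theorem invLim_spectral_of_cofiltered_system
    {I : Type u} [SmallCategory I] [IsCofiltered I] (F : I ⥤ TopCat.{u})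
    (hobj : ∀ i : I, IsSpectralSpace (F.obj i))
    (hmap : ∀ (i j : I) (f : i ⟶ j), IsSpectralMap (F.map f)) :
    IsSpectralSpace (InvLim F) ∧
      (∀ i : I, IsSpectralMap (InvLim.proj F i)) ∧
      (∀ (Y : Type u) [TopologicalSpace Y], IsSpectralSpace Y →
        ∀ g : Y → InvLim F, Continuous g →
          (IsSpectralMap g ↔ ∀ i : I, IsSpectralMap (InvLim.proj F i ∘ g))) ∧
      (∀ (Y : Type u) [TopologicalSpace Y], IsSpectralSpace Y →
        ∀ g : Y → InvLim F, IsSpectralMap g →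
          (∀ i : I, IsGeneralizing (InvLim.proj F i ∘ g)) →
            IsGeneralizing g ∧
              (Function.Surjective g →
                ∀ U : Set (InvLim F), IsOpen U ↔ IsOpen (g ⁻¹' U))) := by
  refine ⟨invLim_isSpectral F hobj hmap, invLim_proj_spectral F hobj hmap, ?_, ?_⟩
  · intro Y _ hY g hgc
    exact invLim_spectral_iff F hobj hmap hY g hgc
  · intro Y _ hY g hg hcomp
    have hgen := invLim_generalizing F hobj hmap hY g hg hcomp
    exact ⟨hgen, fun hsurj U => invLim_quotient F hobj hmap hY g hg hgen hsurj U⟩
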